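/- For dyadic cubes P ⊊ Q in a dyadic grid, a cancellative Haar function h_P^ε and a cancellative Haar function h_Q^η, the commutator satisfies [h_P^ε, I_α^D] h_Q^η = c_α h_Q^η(P) h_P^ε (|Q|^{α/n} − |P|^{α/n}), where h_Q^η(P) denotes the constant value of h_Q^η on P and [b, I_α^D]f = b·I_α^D f − I_α^D(bf). -/

import Mathlib

open MeasureTheory

/-- The dyadic cube of generation `k` indexed by `m ∈ ℤⁿ`; its side length is `2^{-k}`. -/
def dyadicCube (n : ℕ) (k : ℤ) (m : Fin n → ℤ) : Set (Fin n → ℝ) :=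
  Set.univ.pi fun i => Set.Ico ((m i : ℝ) * (2:ℝ) ^ (-k)) (((m i : ℝ) + 1) * (2:ℝ) ^ (-k))

/-- The dyadic fractional integral operator
`I_α^D f = Σ_{Q ∈ D} |Q|^{α/n} ⟨f⟩_Q 1_Q`. -/
noncomputable def IalphaD (n : ℕ) (α : ℝ) (f : (Fin n → ℝ) → ℝ) (x : Fin n → ℝ) : ℝ :=
  ∑' p : ℤ × (Fin n → ℤ),
    (volume (dyadicCube n p.1 p.2)).toReal ^ (α / n) *
      (⨍ y in dyadicCube n p.1 p.2, f y) *
      Set.indicator (dyadicCube n p.1 p.2) (fun _ => (1:ℝ)) x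

/-- The constant `c_α = Σ_{k ≥ 1} 2^{-kα} = 2^{-α}/(1 - 2^{-α})`. -/
noncomputable def cAlpha (α : ℝ) : ℝ := (2:ℝ) ^ (-α) / (1 - (2:ℝ) ^ (-α))

/-- `h` is an L²-normalized cancellative Haar function on the dyadic cube `(k, m)`:
integrable, supported on the cube, mean zero, constant on the dyadic children,
and `‖h‖₂ = 1`. -/
def IsHaar (n : ℕ) (k : ℤ) (m : Fin n → ℤ) (h : (Fin n → ℝ) → ℝ) : Prop :=
  Integrable h volume ∧
  (∀ x, x ∉ dyadicCube n k m → h x = 0) ∧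
  (∫ x, h x) = 0 ∧
  (∀ m' : Fin n → ℤ, dyadicCube n (k + 1) m' ⊆ dyadicCube n k m →
    ∃ c : ℝ, ∀ x ∈ dyadicCube n (k + 1) m', h x = c) ∧
  (∫ x, (h x) ^ 2) = 1

/- ### Auxiliary lemmas -/


lemma two_zpow_pos' (k : ℤ) : (0:ℝ) < 2 ^ k := zpow_pos (by norm_num) k

lemma mem_dyadicCube_iff {n : ℕ} {k : ℤ} {m : Fin n → ℤ} {x : Fin n → ℝ} :
    x ∈ dyadicCube n k m ↔ ∀ i, ⌊x i * 2 ^ k⌋ = m i := by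
  simp only [dyadicCube, Set.mem_pi, Set.mem_univ, forall_true_left, Set.mem_Ico]
  refine forall_congr' fun i => ?_
  have h2 : (0:ℝ) < 2 ^ k := two_zpow_pos' k
  rw [Int.floor_eq_iff, zpow_neg]
  have e1 : (m i : ℝ) * (2 ^ k)⁻¹ ≤ x i ↔ (m i : ℝ) ≤ x i * 2 ^ k := by
    rw [← div_eq_mul_inv, div_le_iff₀ h2]
  have e2 : x i < ((m i : ℝ) + 1) * (2 ^ k)⁻¹ ↔ x i * 2 ^ k < (m i : ℝ) + 1 := by
    rw [← div_eq_mul_inv, lt_div_iff₀ h2]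
  rw [e1, e2]

lemma floor_eq_of_no_int {A B t : ℝ} (h1 : A ≤ t) (h2 : t < B)
    (hno : ∀ j : ℤ, ¬(A < j ∧ (j:ℝ) < B)) : ⌊t⌋ = ⌊A⌋ := by
  have hle : ⌊A⌋ ≤ ⌊t⌋ := Int.floor_mono h1
  rcases eq_or_lt_of_le hle with he | hlt
  · exact he.symm
  · exfalso
    refine hno ⌊t⌋ ⟨?_, lt_of_le_of_lt (Int.floor_le t) h2⟩
    have h3 : (⌊A⌋:ℝ) + 1 ≤ (⌊t⌋:ℝ) := by exact_mod_cast hlt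
    have h4 : A < (⌊A⌋:ℝ) + 1 := Int.lt_floor_add_one A
    linarith

lemma no_int_between {k k0 : ℤ} (hk : k ≤ k0) (a : ℤ) (j : ℤ) :
    ¬((a : ℝ) * 2 ^ (k - k0) < j ∧ (j:ℝ) < ((a:ℝ) + 1) * 2 ^ (k - k0)) := by
  rintro ⟨h1, h2⟩
  set d : ℕ := (k0 - k).toNat with hd
  have hdd : (2:ℝ) ^ (k - k0) = ((2:ℝ) ^ d)⁻¹ := by
    rw [← zpow_natCast, ← zpow_neg]
    congr 1; omega
  have hpos : (0:ℝ) < (2:ℝ) ^ d := by positivity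
  rw [hdd, ← div_eq_mul_inv] at h1 h2
  rw [div_lt_iff₀ hpos] at h1
  rw [lt_div_iff₀ hpos] at h2
  have hi1 : a < j * 2 ^ d := by exact_mod_cast h1
  have hi2 : j * 2 ^ d < a + 1 := by exact_mod_cast h2
  set J := j * 2 ^ d
  omega

lemma floor_const_of_coarser {n : ℕ} {k0 : ℤ} {m0 : Fin n → ℤ} {k : ℤ} (hk : k ≤ k0)
    {y : Fin n → ℝ} (hy : y ∈ dyadicCube n k0 m0) (i : Fin n) :
    ⌊y i * 2 ^ k⌋ = ⌊(m0 i : ℝ) * 2 ^ (k - k0)⌋ := by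
  simp only [dyadicCube, Set.mem_pi, Set.mem_univ, forall_true_left, Set.mem_Ico] at hy
  obtain ⟨hy1, hy2⟩ := hy i
  have h2 : (0:ℝ) < 2 ^ k := two_zpow_pos' k
  have key : (2:ℝ) ^ (-k0) * 2 ^ k = 2 ^ (k - k0) := by
    rw [← zpow_add₀ (by norm_num : (2:ℝ) ≠ 0)]; congr 1; omega
  refine floor_eq_of_no_int ?_ ?_ (no_int_between hk (m0 i))
  · calc (m0 i : ℝ) * 2 ^ (k - k0) = (m0 i : ℝ) * 2 ^ (-k0) * 2 ^ k := by rw [mul_assoc, key]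
      _ ≤ y i * 2 ^ k := mul_le_mul_of_nonneg_right hy1 h2.le
  · calc y i * 2 ^ k < ((m0 i : ℝ) + 1) * 2 ^ (-k0) * 2 ^ k :=
          mul_lt_mul_of_pos_right hy2 h2
      _ = ((m0 i : ℝ) + 1) * 2 ^ (k - k0) := by rw [mul_assoc, key]

/-- If a point of the finer cube `(k0, m0)` lies in the coarser cube `(k, m)` then
the finer cube is contained in the coarser one. -/
lemma subset_of_mem_dyadic {n : ℕ} {k0 : ℤ} {m0 : Fin n → ℤ} {k : ℤ} {m : Fin n → ℤ}
    (hk : k ≤ k0) {z : Fin n → ℝ} (hz : z ∈ dyadicCube n k0 m0)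
    (hz' : z ∈ dyadicCube n k m) : dyadicCube n k0 m0 ⊆ dyadicCube n k m := by
  intro y hy
  rw [mem_dyadicCube_iff] at hz' ⊢
  intro i
  rw [floor_const_of_coarser hk hy i, ← floor_const_of_coarser hk hz i]
  exact hz' i

lemma measurableSet_dyadicCube {n : ℕ} {k : ℤ} {m : Fin n → ℤ} :
    MeasurableSet (dyadicCube n k m) :=
  MeasurableSet.univ_pi fun _ => measurableSet_Ico

lemma volume_dyadicCube (n : ℕ) (k : ℤ) (m : Fin n → ℤ) :
    volume (dyadicCube n k m) = ENNReal.ofReal (((2:ℝ) ^ (-k)) ^ n) := by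
  rw [dyadicCube, volume_pi_pi]
  have : ∀ i : Fin n, volume (Set.Ico ((m i : ℝ) * (2:ℝ) ^ (-k)) (((m i : ℝ) + 1) * (2:ℝ) ^ (-k)))
      = ENNReal.ofReal ((2:ℝ) ^ (-k)) := by
    intro i
    rw [Real.volume_Ico]
    congr 1
    ring
  simp only [this, Finset.prod_const, Finset.card_univ, Fintype.card_fin]
  rw [← ENNReal.ofReal_pow (two_zpow_pos' (-k)).le]

lemma volume_dyadicCube_toReal (n : ℕ) (k : ℤ) (m : Fin n → ℤ) :
    (volume (dyadicCube n k m)).toReal = ((2:ℝ) ^ (-k)) ^ n := by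
  rw [volume_dyadicCube, ENNReal.toReal_ofReal (by positivity)]

lemma pow_rpow_eq (n : ℕ) (hn : 0 < n) (k : ℤ) (α : ℝ) :
    (((2:ℝ) ^ (-k)) ^ n) ^ (α / n) = (2:ℝ) ^ (-(k:ℝ) * α) := by
  have h2 : (0:ℝ) < (2:ℝ) ^ (-k) := two_zpow_pos' _
  rw [← Real.rpow_natCast ((2:ℝ) ^ (-k)) n, ← Real.rpow_mul h2.le]
  have hna : (n:ℝ) * (α / n) = α := by
    field_simp
  rw [hna, ← Real.rpow_intCast 2 (-k), ← Real.rpow_mul (by norm_num : (0:ℝ) ≤ 2)]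
  push_cast
  ring_nf

lemma IalphaD_const_mul (n : ℕ) (α : ℝ) (c : ℝ) (f : (Fin n → ℝ) → ℝ) (x : Fin n → ℝ) :
    IalphaD n α (fun y => c * f y) x = c * IalphaD n α f x := by
  rw [IalphaD, IalphaD, ← tsum_mul_left]
  refine tsum_congr fun p => ?_
  rw [setAverage_eq, setAverage_eq, integral_const_mul, smul_eq_mul, smul_eq_mul]
  ring

/-- Haar functions are eigenfunctions of the dyadic fractional integral:
`I_α^D h = c_α |Q|^{α/n} h`. -/
lemma IalphaD_haar {n : ℕ} (hn : 0 < n) {α : ℝ} (hα : 0 < α) {k0 : ℤ} {m0 : Fin n → ℤ}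
    {h : (Fin n → ℝ) → ℝ} (hh : IsHaar n k0 m0 h) (x : Fin n → ℝ) :
    IalphaD n α h x = cAlpha α * (volume (dyadicCube n k0 m0)).toReal ^ (α / n) * h x := by
  obtain ⟨hint, hsupp, hmean, hchild, -⟩ := hh
  -- the integral of `h` over any cube of generation `≤ k0` vanishes
  have hint0 : ∀ k : ℤ, k ≤ k0 → ∀ m : Fin n → ℤ, ∫ y in dyadicCube n k m, h y = 0 := by
    intro k hk m
    by_cases hd : ∃ z, z ∈ dyadicCube n k0 m0 ∧ z ∈ dyadicCube n k m
    · obtain ⟨z, hz0, hzm⟩ := hd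
      rw [setIntegral_eq_integral_of_forall_compl_eq_zero
        (fun y hy => hsupp y fun hc => hy (subset_of_mem_dyadic hk hz0 hzm hc))]
      exact hmean
    · push_neg at hd
      rw [setIntegral_congr_fun measurableSet_dyadicCube
        (fun y hy => hsupp y fun hc => hd y hc hy)]
      simp
  set F : ℤ × (Fin n → ℤ) → ℝ := fun p =>
    (volume (dyadicCube n p.1 p.2)).toReal ^ (α / n) *
      (⨍ y in dyadicCube n p.1 p.2, h y) *
      Set.indicator (dyadicCube n p.1 p.2) (fun _ => (1:ℝ)) x with hF
  set e : ℤ → ℤ × (Fin n → ℤ) := fun k => (k, fun i => ⌊x i * 2 ^ k⌋) with he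
  have hxk : ∀ k : ℤ, x ∈ dyadicCube n k (fun i => ⌊x i * 2 ^ k⌋) :=
    fun k => mem_dyadicCube_iff.2 fun i => rfl
  have hinj : Function.Injective e := fun a b hab => congrArg Prod.fst hab
  have hsupF : Function.support F ⊆ Set.range e := by
    intro p hp
    by_contra hpr
    apply hp
    have hxp : x ∉ dyadicCube n p.1 p.2 := by
      intro hx
      exact hpr ⟨p.1, Prod.ext rfl (funext fun i => (mem_dyadicCube_iff.1 hx i).symm ▸ rfl)⟩
    simp [hF, Set.indicator_of_notMem hxp]
  have e1 : IalphaD n α h x = ∑' k : ℤ, F (e k) := by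
    rw [IalphaD, hinj.tsum_eq hsupF]
  by_cases hx : x ∈ dyadicCube n k0 m0
  · -- main case: `x` in the cube
    obtain ⟨c, hc⟩ := hchild (fun i => ⌊x i * 2 ^ (k0+1)⌋)
      (subset_of_mem_dyadic (by omega) (hxk (k0+1)) hx)
    have hcx : c = h x := (hc x (hxk (k0+1))).symm
    have hG : ∀ k : ℤ, F (e k) =
        h x * (if k0 < k then (2:ℝ) ^ (-(k:ℝ) * α) else 0) := by
      intro k
      rcases le_or_gt k k0 with hk | hk
      · rw [if_neg (not_lt.2 hk), mul_zero]
        have havg : ⨍ y in dyadicCube n k (fun i => ⌊x i * 2 ^ k⌋), h y = 0 := by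
          rw [setAverage_eq, hint0 k hk]
          simp
        simp [hF, he, havg]
      · rw [if_pos hk]
        have hsub1 : dyadicCube n k (fun i => ⌊x i * 2 ^ k⌋)
            ⊆ dyadicCube n (k0+1) (fun i => ⌊x i * 2 ^ (k0+1)⌋) :=
          subset_of_mem_dyadic (by omega) (hxk k) (hxk (k0+1))
        have hV : ((2:ℝ) ^ (-k)) ^ n ≠ 0 := by positivity
        have havg : ⨍ y in dyadicCube n k (fun i => ⌊x i * 2 ^ k⌋), h y = h x := by
          rw [setAverage_eq, setIntegral_congr_fun measurableSet_dyadicCube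
            (fun y hy => (hc y (hsub1 hy)).trans hcx), setIntegral_const, Measure.real,
            volume_dyadicCube_toReal, smul_eq_mul, smul_eq_mul]
          field_simp
        simp only [hF, he, havg, Set.indicator_of_mem (hxk k), volume_dyadicCube_toReal,
          pow_rpow_eq n hn k α, mul_one]
        ring
    have hT : ∑' k : ℤ, (if k0 < k then (2:ℝ) ^ (-(k:ℝ) * α) else 0)
        = cAlpha α * (2:ℝ) ^ (-(k0:ℝ) * α) := by
      have hj : Function.Injective (fun j : ℕ => k0 + 1 + (j:ℤ)) := by
        intro a b hab
        simp only at hab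
        omega
      have hsupT : Function.support (fun k : ℤ => (if k0 < k then (2:ℝ) ^ (-(k:ℝ) * α) else 0))
          ⊆ Set.range (fun j : ℕ => k0 + 1 + (j:ℤ)) := by
        intro k hk
        simp only [Function.mem_support] at hk
        have hlt : k0 < k := by
          by_contra hcon
          exact hk (if_neg hcon)
        exact ⟨(k - (k0+1)).toNat, by show k0 + 1 + ((k - (k0+1)).toNat : ℤ) = k; omega⟩
      rw [← hj.tsum_eq hsupT]
      have hterm : ∀ j : ℕ, (if k0 < k0 + 1 + (j:ℤ) then (2:ℝ) ^ (-((k0 + 1 + (j:ℤ) : ℤ):ℝ) * α) else 0)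
          = ((2:ℝ) ^ (-(k0:ℝ) * α) * (2:ℝ) ^ (-α)) * ((2:ℝ) ^ (-α)) ^ j := by
        intro j
        rw [if_pos (by omega)]
        rw [← Real.rpow_natCast ((2:ℝ) ^ (-α)) j, ← Real.rpow_mul (by norm_num : (0:ℝ) ≤ 2),
          ← Real.rpow_add (by norm_num : (0:ℝ) < 2), ← Real.rpow_add (by norm_num : (0:ℝ) < 2)]
        congr 1
        push_cast
        ring
      calc (∑' j : ℕ, (if k0 < k0 + 1 + (j:ℤ) then (2:ℝ) ^ (-((k0 + 1 + (j:ℤ) : ℤ):ℝ) * α) else 0))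
          = ∑' j : ℕ, ((2:ℝ) ^ (-(k0:ℝ) * α) * (2:ℝ) ^ (-α)) * ((2:ℝ) ^ (-α)) ^ j :=
            tsum_congr hterm
        _ = ((2:ℝ) ^ (-(k0:ℝ) * α) * (2:ℝ) ^ (-α)) * (1 - (2:ℝ) ^ (-α))⁻¹ := by
            rw [tsum_mul_left, tsum_geometric_of_lt_one (Real.rpow_nonneg (by norm_num) _)
              (Real.rpow_lt_one_of_one_lt_of_neg (by norm_num) (by linarith))]
        _ = cAlpha α * (2:ℝ) ^ (-(k0:ℝ) * α) := by
            rw [cAlpha]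
            ring
    rw [e1, tsum_congr hG, tsum_mul_left, hT, volume_dyadicCube_toReal,
      pow_rpow_eq n hn k0 α]
    ring
  · -- `x` outside the cube: both sides vanish
    have hx0 : h x = 0 := hsupp x hx
    have hG0 : ∀ k : ℤ, F (e k) = 0 := by
      intro k
      rcases le_or_gt k k0 with hk | hk
      · have havg : ⨍ y in dyadicCube n k (fun i => ⌊x i * 2 ^ k⌋), h y = 0 := by
          rw [setAverage_eq, hint0 k hk]
          simp
        simp [hF, he, havg]
      · obtain ⟨i, hi⟩ : ∃ i, ⌊x i * 2 ^ k0⌋ ≠ m0 i := by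
          by_contra hcon
          push_neg at hcon
          exact hx (mem_dyadicCube_iff.2 hcon)
        have hQsub : dyadicCube n k (fun i => ⌊x i * 2 ^ k⌋)
            ⊆ dyadicCube n k0 (fun i => ⌊x i * 2 ^ k0⌋) :=
          subset_of_mem_dyadic hk.le (hxk k) (hxk k0)
        have hz : ∀ y ∈ dyadicCube n k (fun i => ⌊x i * 2 ^ k⌋), h y = 0 := by
          intro y hy
          refine hsupp y fun hyc => hi ?_
          rw [← mem_dyadicCube_iff.1 (hQsub hy) i]
          exact mem_dyadicCube_iff.1 hyc i
        have havg : ⨍ y in dyadicCube n k (fun i => ⌊x i * 2 ^ k⌋), h y = 0 := by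
          rw [setAverage_eq, setIntegral_congr_fun measurableSet_dyadicCube hz]
          simp
        simp [hF, he, havg]
    rw [e1, tsum_congr hG0, tsum_zero, hx0, mul_zero]


/-- for dyadic cubes `P ⊊ Q`, cancellative Haar functions
`h_P^ε`, `h_Q^η`, and `v` the constant value of `h_Q^η` on `P`:
`[h_P^ε, I_α^D] h_Q^η = c_α v h_P^ε (|Q|^{α/n} - |P|^{α/n})`. -/
theorem stmt10 (n : ℕ) (hn : 0 < n) (α : ℝ) (hα : 0 < α) (hαn : α < n)
    (kP : ℤ) (mP : Fin n → ℤ) (kQ : ℤ) (mQ : Fin n → ℤ)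
    (hP hQ : (Fin n → ℝ) → ℝ)
    (hhP : IsHaar n kP mP hP) (hhQ : IsHaar n kQ mQ hQ)
    (hsub : dyadicCube n kP mP ⊂ dyadicCube n kQ mQ)
    (v : ℝ) (hv : ∀ x ∈ dyadicCube n kP mP, hQ x = v) :
    ∀ x, hP x * IalphaD n α hQ x - IalphaD n α (fun y => hP y * hQ y) x =
      cAlpha α * v * hP x *
        ((volume (dyadicCube n kQ mQ)).toReal ^ (α / n) -
          (volume (dyadicCube n kP mP)).toReal ^ (α / n)) := by
  intro x
  have hPval : hP x * hQ x = v * hP x := by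
    by_cases hxP : x ∈ dyadicCube n kP mP
    · rw [hv x hxP]; ring
    · rw [hhP.2.1 x hxP]; ring
  have hfq : (fun y => hP y * hQ y) = fun y => v * hP y := by
    funext y
    by_cases hyP : y ∈ dyadicCube n kP mP
    · rw [hv y hyP]; ring
    · rw [hhP.2.1 y hyP]; ring
  rw [hfq, IalphaD_const_mul, IalphaD_haar hn hα hhP x, IalphaD_haar hn hα hhQ x]
  linear_combination cAlpha α * (volume (dyadicCube n kQ mQ)).toReal ^ (α / n) * hPval
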